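/- In the CK graph CK(r, g) with g ≥ 2, if w_B < 2·w_A and (g−1)·w_B > 2·w_A, then the weights of the maximal independent sets take exactly three values ordered as 2g·w_A > g·w_B > 2·w_A + w_B; in particular the r^g one-vertex-per-clique selections S_f are precisely the maximal independent sets attaining the second-largest weight g·w_B. -/

import Mathlib

open Finset

/-- Vertex type of the CK graph `CK(r,g)`: `V_A` = `g` groups of 2 vertices (left),
`V_B` = `g` cliques of `r` vertices (right). -/
abbrev CKV (r g : ℕ) := (Fin g × Fin 2) ⊕ (Fin g × Fin r)

/-- The CK graph `CK(r,g)`: no edges inside `V_A`; each `r`-clique of `V_B` is complete;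
a vertex of group `k` of `V_A` is adjacent to every vertex of every clique of `V_B`
except clique `k`; no edges between distinct cliques of `V_B`. -/
def CKGraph (r g : ℕ) : SimpleGraph (CKV r g) where
  Adj u v :=
    match u, v with
    | Sum.inl _, Sum.inl _ => False
    | Sum.inl a, Sum.inr b => a.1 ≠ b.1
    | Sum.inr a, Sum.inl b => b.1 ≠ a.1
    | Sum.inr a, Sum.inr b => a.1 = b.1 ∧ a.2 ≠ b.2
  symm := by
    constructor
    rintro (⟨k, a⟩ | ⟨k, a⟩) (⟨l, b⟩ | ⟨l, b⟩) h
    · exact h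
    · exact h
    · exact h
    · exact ⟨h.1.symm, h.2.symm⟩
  loopless := by
    constructor
    rintro (⟨k, a⟩ | ⟨k, a⟩) h
    · exact h
    · exact h.2 rfl

/-- `S` is an independent set of `CK(r,g)`. -/
def CKIndep {r g : ℕ} (S : Finset (CKV r g)) : Prop :=
  ∀ u ∈ S, ∀ v ∈ S, ¬ (CKGraph r g).Adj u v

/-- `S` is a maximal independent set of `CK(r,g)`. -/
def CKMaxIndep {r g : ℕ} (S : Finset (CKV r g)) : Prop :=
  CKIndep S ∧ ∀ v : CKV r g, CKIndep (insert v S) → v ∈ S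

/-- The total weight of `S`, where `V_A`-vertices weigh `wA` and `V_B`-vertices weigh `wB`. -/
def CKwt {r g : ℕ} (wA wB : ℝ) (S : Finset (CKV r g)) : ℝ :=
  ∑ v ∈ S, Sum.elim (fun _ => wA) (fun _ => wB) v

/-- The set `V_A` of the CK graph, as a `Finset`. -/
def VA (r g : ℕ) : Finset (CKV r g) :=
  (Finset.univ : Finset (Fin g × Fin 2)).image Sum.inl

/-- For `f : Fin g → Fin r`, the selection `S_f` consisting of the `f k`-th vertex of
clique `k` of `V_B`, for each `k`. -/
def Sf {r g : ℕ} (f : Fin g → Fin r) : Finset (CKV r g) :=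
  (Finset.univ : Finset (Fin g)).image (fun k => Sum.inr (k, f k))


section Helpers

variable {r g : ℕ}

lemma adj_ll (a b : Fin g × Fin 2) : ¬ (CKGraph r g).Adj (Sum.inl a) (Sum.inl b) :=
  fun h => h

lemma adj_lr (a : Fin g × Fin 2) (b : Fin g × Fin r) :
    (CKGraph r g).Adj (Sum.inl a) (Sum.inr b) ↔ a.1 ≠ b.1 := Iff.rfl

lemma adj_rl (a : Fin g × Fin r) (b : Fin g × Fin 2) :
    (CKGraph r g).Adj (Sum.inr a) (Sum.inl b) ↔ b.1 ≠ a.1 := Iff.rfl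

lemma adj_rr (a b : Fin g × Fin r) :
    (CKGraph r g).Adj (Sum.inr a) (Sum.inr b) ↔ a.1 = b.1 ∧ a.2 ≠ b.2 := Iff.rfl

lemma mem_VA (v : CKV r g) : v ∈ VA r g ↔ ∃ x, Sum.inl x = v := by
  simp [VA]

lemma exists_ne_fin (hg : 2 ≤ g) (m : Fin g) : ∃ k : Fin g, k ≠ m := by
  by_cases h : m = ⟨0, by omega⟩
  · exact ⟨⟨1, by omega⟩, by simp [h, Fin.ext_iff]⟩
  · exact ⟨⟨0, by omega⟩, fun e => h e.symm⟩

lemma classify (hr : 1 ≤ r) (hg : 2 ≤ g) (S : Finset (CKV r g)) (hS : CKMaxIndep S) :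
    S = VA r g ∨ (∃ f : Fin g → Fin r, S = Sf f) ∨
      (∃ (k : Fin g) (j : Fin r),
        S = {Sum.inl (k, 0), Sum.inl (k, 1), Sum.inr (k, j)}) := by
  obtain ⟨hind, hmax⟩ := hS
  by_cases hB : ∃ k j, Sum.inr (k, j) ∈ S
  · obtain ⟨k, j, hkj⟩ := hB
    by_cases hA : ∃ l a, Sum.inl (l, a) ∈ S
    · right; right
      obtain ⟨l, a, hla⟩ := hA
      -- all inr's in S are in clique l
      have hBl : ∀ m b, Sum.inr (m, b) ∈ S → m = l := by
        intro m b hm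
        by_contra h
        exact hind _ hla _ hm (fun e => h e.symm)
      have hlk : l = k := (hBl k j hkj).symm
      subst hlk
      -- only one inr in S
      have hBuniq : ∀ m b, Sum.inr (m, b) ∈ S → b = j := by
        intro m b hm
        have hm' : m = l := hBl m b hm
        subst hm'
        by_contra h
        exact hind _ hm _ hkj ⟨rfl, h⟩
      -- both inl's of group l are in S
      have hin : ∀ c : Fin 2, Sum.inl (l, c) ∈ S := by
        intro c
        apply hmax
        intro u hu v hv
        rcases Finset.mem_insert.mp hu with hu | hu <;>
          rcases Finset.mem_insert.mp hv with hv | hv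
        · subst hu; subst hv; exact (CKGraph r g).irrefl
        · subst hu
          match v, hv with
          | Sum.inl x, hv => exact adj_ll _ _
          | Sum.inr (m, b), hv =>
            have := hBl m b hv
            subst this
            exact fun h => h rfl
        · subst hv
          match u, hu with
          | Sum.inl x, hu => exact adj_ll _ _
          | Sum.inr (m, b), hu =>
            have := hBl m b hu
            subst this
            exact fun h => h rfl
        · exact hind _ hu _ hv
      refine ⟨l, j, ?_⟩
      ext v
      simp only [Finset.mem_insert, Finset.mem_singleton]
      constructor
      · intro hv
        match v, hv with
        | Sum.inl (m, b), hv =>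
          have hm : m = l := by
            by_contra h
            exact hind _ hv _ hkj h
          subst hm
          fin_cases b
          · left; rfl
          · right; left; rfl
        | Sum.inr (m, b), hv =>
          have hm : m = l := hBl m b hv
          subst hm
          have hb : b = j := hBuniq _ b hv
          subst hb
          right; right; rfl
      · rintro (rfl | rfl | rfl)
        · exact hin 0
        · exact hin 1
        · exact hkj
    · -- pure B case
      right; left
      push_neg at hA
      have hall : ∀ m : Fin g, ∃ b, Sum.inr (m, b) ∈ S := by
        intro m
        by_contra h
        push_neg at h
        have : Sum.inr (m, (⟨0, hr⟩ : Fin r)) ∈ S := by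
          apply hmax
          intro u hu v hv
          rcases Finset.mem_insert.mp hu with hu | hu <;>
            rcases Finset.mem_insert.mp hv with hv | hv
          · subst hu; subst hv; exact (CKGraph r g).irrefl
          · subst hu
            match v, hv with
            | Sum.inl (x, c), hv => exact absurd hv (hA x c)
            | Sum.inr (m', b'), hv =>
              intro hadj
              have hm : m = m' := hadj.1
              rw [← hm] at hv
              exact h b' hv
          · subst hv
            match u, hu with
            | Sum.inl (x, c), hu => exact absurd hu (hA x c)
            | Sum.inr (m', b'), hu =>
              intro hadj
              have hm : m' = m := hadj.1
              rw [hm] at hu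
              exact h b' hu
          · exact hind _ hu _ hv
        exact h _ this
      choose f hf using hall
      refine ⟨f, ?_⟩
      ext v
      simp only [Sf, Finset.mem_image, Finset.mem_univ, true_and]
      constructor
      · intro hv
        match v, hv with
        | Sum.inl (x, c), hv => exact absurd hv (hA x c)
        | Sum.inr (m, b), hv =>
          refine ⟨m, ?_⟩
          have hb : f m = b := by
            by_contra hb
            exact hind _ (hf m) _ hv ⟨rfl, hb⟩
          rw [hb]
      · rintro ⟨m, rfl⟩
        exact hf m
  · -- pure A case
    left
    push_neg at hB
    ext v
    rw [mem_VA]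
    constructor
    · intro hv
      match v with
      | Sum.inl x => exact ⟨x, rfl⟩
      | Sum.inr (m, b) => exact absurd hv (hB m b)
    · rintro ⟨x, rfl⟩
      apply hmax
      intro u hu v hv
      rcases Finset.mem_insert.mp hu with hu | hu <;>
        rcases Finset.mem_insert.mp hv with hv | hv
      · subst hu; subst hv; exact (CKGraph r g).irrefl
      · subst hu
        match v, hv with
        | Sum.inl y, hv => exact adj_ll _ _
        | Sum.inr (m, b), hv => exact absurd hv (hB m b)
      · subst hv
        match u, hu with
        | Sum.inl y, hu => exact adj_ll _ _
        | Sum.inr (m, b), hu => exact absurd hu (hB m b)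
      · exact hind _ hu _ hv

lemma maxIndep_VA (hg : 2 ≤ g) : CKMaxIndep (VA r g : Finset (CKV r g)) := by
  constructor
  · intro u hu v hv
    rw [mem_VA] at hu hv
    obtain ⟨x, rfl⟩ := hu
    obtain ⟨y, rfl⟩ := hv
    exact adj_ll _ _
  · intro v hv
    rw [mem_VA]
    match v with
    | Sum.inl x => exact ⟨x, rfl⟩
    | Sum.inr (m, b) =>
      exfalso
      -- find a group k ≠ m
      obtain ⟨k, hk⟩ : ∃ k : Fin g, k ≠ m := exists_ne_fin hg m
      have hmem : Sum.inl ((k, 0) : Fin g × Fin 2) ∈ insert (Sum.inr (m, b) : CKV r g) (VA r g) := by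
        apply Finset.mem_insert_of_mem
        rw [mem_VA]; exact ⟨(k, 0), rfl⟩
      exact hv _ hmem _ (Finset.mem_insert_self _ _) hk

lemma maxIndep_Sf (hg : 2 ≤ g) (f : Fin g → Fin r) : CKMaxIndep (Sf f) := by
  constructor
  · intro u hu v hv
    simp only [Sf, Finset.mem_image, Finset.mem_univ, true_and] at hu hv
    obtain ⟨k, rfl⟩ := hu
    obtain ⟨l, rfl⟩ := hv
    rw [adj_rr]
    rintro ⟨h1, h2⟩
    simp only at h1
    subst h1
    exact h2 rfl
  · intro v hv
    simp only [Sf, Finset.mem_image, Finset.mem_univ, true_and]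
    match v with
    | Sum.inl (m, a) =>
      exfalso
      obtain ⟨k, hk⟩ := exists_ne_fin hg m
      have hmem : (Sum.inr (k, f k) : CKV r g) ∈ insert (Sum.inl (m, a) : CKV r g) (Sf f) := by
        apply Finset.mem_insert_of_mem
        simp only [Sf, Finset.mem_image, Finset.mem_univ, true_and]
        exact ⟨k, rfl⟩
      exact hv _ (Finset.mem_insert_self _ _) _ hmem (fun h => hk h.symm)
    | Sum.inr (m, b) =>
      refine ⟨m, ?_⟩
      have hmem : (Sum.inr (m, f m) : CKV r g) ∈ insert (Sum.inr (m, b) : CKV r g) (Sf f) := by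
        apply Finset.mem_insert_of_mem
        simp only [Sf, Finset.mem_image, Finset.mem_univ, true_and]
        exact ⟨m, rfl⟩
      have := hv _ (Finset.mem_insert_self _ _) _ hmem
      rw [adj_rr] at this
      push_neg at this
      have hb : f m = b := (this rfl).symm
      rw [hb]

lemma maxIndep_triple (hg : 2 ≤ g) (k : Fin g) (j : Fin r) :
    CKMaxIndep ({Sum.inl (k, 0), Sum.inl (k, 1), Sum.inr (k, j)} : Finset (CKV r g)) := by
  constructor
  · intro u hu v hv
    simp only [Finset.mem_insert, Finset.mem_singleton] at hu hv
    rcases hu with rfl | rfl | rfl <;> rcases hv with rfl | rfl | rfl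
    · exact (CKGraph r g).irrefl
    · exact adj_ll _ _
    · exact fun h => h rfl
    · exact adj_ll _ _
    · exact (CKGraph r g).irrefl
    · exact fun h => h rfl
    · exact fun h => h rfl
    · exact fun h => h rfl
    · exact (CKGraph r g).irrefl
  · intro v hv
    simp only [Finset.mem_insert, Finset.mem_singleton]
    have hjmem : (Sum.inr (k, j) : CKV r g) ∈
        insert v ({Sum.inl (k, 0), Sum.inl (k, 1), Sum.inr (k, j)} : Finset (CKV r g)) := by
      apply Finset.mem_insert_of_mem; simp
    match v with
    | Sum.inl (m, a) =>
      have hmk : m = k := by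
        by_contra h
        exact hv _ (Finset.mem_insert_self _ _) _ hjmem h
      subst hmk
      fin_cases a
      · left; rfl
      · right; left; rfl
    | Sum.inr (m, b) =>
      have hmk : m = k := by
        by_contra h
        have h0mem : (Sum.inl (k, 0) : CKV r g) ∈
            insert (Sum.inr (m, b) : CKV r g)
              ({Sum.inl (k, 0), Sum.inl (k, 1), Sum.inr (k, j)} : Finset (CKV r g)) := by
          apply Finset.mem_insert_of_mem; simp
        exact hv _ h0mem _ (Finset.mem_insert_self _ _) (fun e => h e.symm)
      subst hmk
      have hb : b = j := by
        by_contra h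
        exact hv _ (Finset.mem_insert_self _ _) _ hjmem ⟨rfl, h⟩
      subst hb
      right; right; rfl

lemma wt_VA (wA wB : ℝ) : CKwt wA wB (VA r g) = 2 * g * wA := by
  unfold CKwt VA
  rw [Finset.sum_image (by intro x _ y _ h; exact Sum.inl.inj h)]
  simp only [Sum.elim_inl, Finset.sum_const, Finset.card_univ, Fintype.card_prod,
    Fintype.card_fin, nsmul_eq_mul]
  push_cast
  ring

lemma wt_Sf (wA wB : ℝ) (f : Fin g → Fin r) : CKwt wA wB (Sf f) = g * wB := by
  unfold CKwt Sf
  rw [Finset.sum_image (by intro x _ y _ h; exact (Prod.mk.injEq _ _ _ _ ▸ Sum.inr.inj h).1)]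
  simp only [Sum.elim_inr, Finset.sum_const, Finset.card_univ, Fintype.card_fin, nsmul_eq_mul]

lemma wt_triple (wA wB : ℝ) (k : Fin g) (j : Fin r) :
    CKwt wA wB ({Sum.inl (k, 0), Sum.inl (k, 1), Sum.inr (k, j)} : Finset (CKV r g)) =
      2 * wA + wB := by
  unfold CKwt
  rw [Finset.sum_insert (by simp), Finset.sum_insert (by simp), Finset.sum_singleton]
  simp only [Sum.elim_inl, Sum.elim_inr]
  ring

end Helpers

theorem stmt11 (r g : ℕ) (hr : 1 ≤ r) (hg : 2 ≤ g)
    (wA wB : ℝ) (hwA : 0 < wA) (hwB : 0 < wB)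
    (h1 : wB < 2 * wA) (h2 : 2 * wA < ((g : ℝ) - 1) * wB) :
    ((2 * g * wA > g * wB ∧ g * wB > 2 * wA + wB) ∧
     (∀ S : Finset (CKV r g), CKMaxIndep S →
        CKwt wA wB S = 2 * g * wA ∨ CKwt wA wB S = g * wB ∨
          CKwt wA wB S = 2 * wA + wB) ∧
     (∃ S : Finset (CKV r g), CKMaxIndep S ∧ CKwt wA wB S = 2 * g * wA) ∧
     (∃ S : Finset (CKV r g), CKMaxIndep S ∧ CKwt wA wB S = g * wB) ∧
     (∃ S : Finset (CKV r g), CKMaxIndep S ∧ CKwt wA wB S = 2 * wA + wB)) ∧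
    (∀ S : Finset (CKV r g), CKMaxIndep S →
      (CKwt wA wB S = g * wB ↔ ∃ f : Fin g → Fin r, S = Sf f)) := by
  have hg1 : (1 : ℝ) ≤ (g : ℝ) := by exact_mod_cast Nat.one_le_of_lt hg
  have hg0 : (0 : ℝ) < (g : ℝ) := by linarith
  have hgt1 : 2 * (g : ℝ) * wA > g * wB := by nlinarith
  have hgt2 : (g : ℝ) * wB > 2 * wA + wB := by nlinarith
  refine ⟨⟨⟨hgt1, hgt2⟩, ?_, ?_, ?_, ?_⟩, ?_⟩
  · intro S hS
    rcases classify hr hg S hS with rfl | ⟨f, rfl⟩ | ⟨k, j, rfl⟩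
    · exact Or.inl (wt_VA wA wB)
    · exact Or.inr (Or.inl (wt_Sf wA wB f))
    · exact Or.inr (Or.inr (wt_triple wA wB k j))
  · exact ⟨VA r g, maxIndep_VA hg, wt_VA wA wB⟩
  · exact ⟨Sf (fun _ => ⟨0, hr⟩), maxIndep_Sf hg _, wt_Sf wA wB _⟩
  · exact ⟨{Sum.inl (⟨0, by omega⟩, 0), Sum.inl (⟨0, by omega⟩, 1),
      Sum.inr (⟨0, by omega⟩, ⟨0, hr⟩)}, maxIndep_triple hg _ _, wt_triple wA wB _ _⟩
  · intro S hS
    constructor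
    · intro hwt
      rcases classify hr hg S hS with rfl | ⟨f, rfl⟩ | ⟨k, j, rfl⟩
      · rw [wt_VA] at hwt; linarith
      · exact ⟨f, rfl⟩
      · rw [wt_triple] at hwt; linarith
    · rintro ⟨f, rfl⟩
      exact wt_Sf wA wB f
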